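/- arXiv:0812.1468 — 2 statements merged into one kernel-verified Lean document; each statement's English description precedes it below -/
import Mathlib

section
/- Let A ⋊^σ G be a skew category algebra (all α(s,t) = 1) over a small category G with finitely many objects, where σ is a functor from G to rings. Let R be a congruence relation on G contained in the kernel of σ (i.e., R-equivalent morphisms have equal σ). If I is the twosided ideal generated by an element Σ_{s∈G} a_s u_s with a_s = 0 whenever s is not R-equivalent to an identity morphism and Σ_{s∈[e]} a_s = 0 for every object e, then A ∩ I = {0}. -/
open CategoryTheory Function

/-- The type of morphisms of a category `G`, bundled with domain and codomain. -/
abbrev CMor (G : Type*) [Category G] := Σ e f : G, e ⟶ f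

/-- Transport along an equality of objects, as a ring homomorphism. -/
def castRH {G : Type*} (A : G → Type*) [∀ e, Ring (A e)]
    {e f : G} (h : e = f) : A e →+* A f := by subst h; exact RingHom.id _

/-- The carrier of the category crossed product `A ⋊_α^σ G`: finitely supported
formal sums `Σ_s a_s u_s` with `a_s ∈ A_{c(s)}`. -/
abbrev CP {G : Type*} [Category G] (A : G → Type*) [∀ e, Ring (A e)] :=
  Π₀ p : CMor G, A p.2.1

open Classical in
/-- The multiplication of the category crossed product:
`(a u_s)(b u_t) = a σ_s(b) α(s,t) u_{st}` when `d(s) = c(t)`, else `0`. -/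
noncomputable def catMul {G : Type*} [Category G] {A : G → Type*} [∀ e, Ring (A e)]
    (σ : ∀ e f : G, (e ⟶ f) → (A e →+* A f))
    (α : ∀ e f g : G, (f ⟶ g) → (e ⟶ f) → A g)
    (x y : CP A) : CP A :=
  x.sum fun p a => y.sum fun q b =>
    if h : q.2.1 = p.1 then
      DFinsupp.single (⟨q.1, p.2.1, (q.2.2 ≫ eqToHom h) ≫ p.2.2⟩ : CMor G)
        (a * σ p.1 p.2.1 p.2.2 (castRH A h b) * α q.1 p.1 p.2.1 p.2.2 (q.2.2 ≫ eqToHom h))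
    else 0

open Classical in
/-- `a u_s`, the formal sum supported on a single morphism. -/
noncomputable def catSingle {G : Type*} [Category G] {A : G → Type*} [∀ e, Ring (A e)]
    (p : CMor G) (a : A p.2.1) : CP A := DFinsupp.single p a

/-- `I` is a twosided ideal of the category crossed product `A ⋊_α^σ G`. -/
def IsCrossedIdeal {G : Type*} [Category G] {A : G → Type*} [∀ e, Ring (A e)]
    (σ : ∀ e f : G, (e ⟶ f) → (A e →+* A f))
    (α : ∀ e f g : G, (f ⟶ g) → (e ⟶ f) → A g)
    (I : Set (CP A)) : Prop :=
  (0 : CP A) ∈ I ∧ (∀ x y, x ∈ I → y ∈ I → x + y ∈ I) ∧ (∀ x, x ∈ I → -x ∈ I) ∧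
    ∀ x r, x ∈ I → catMul σ α r x ∈ I ∧ catMul σ α x r ∈ I



section ClosedSum

variable {β : Type*} {M : Type*} [AddCommMonoid M]

open Classical in
lemma closed_sum (Rel : β → β → Prop)
    (hrefl : ∀ a, Rel a a) (hsym : ∀ a b, Rel a b → Rel b a)
    (htr : ∀ a b c, Rel a b → Rel b c → Rel a c)
    (g : β → M) (hfin : (Function.support g).Finite)
    (hcl : ∀ t, (∑ᶠ u, if Rel u t then g u else 0) = 0) :
    ∀ (n : ℕ) (Q : β → Prop), ({u | Q u} ∩ Function.support g).ncard ≤ n →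
      (∀ u u', Q u → Rel u u' → Q u') → (∑ᶠ u, if Q u then g u else 0) = 0 := by
  classical
  intro n
  induction n with
  | zero =>
    intro Q hcard hQ
    have hfin' : ({u | Q u} ∩ Function.support g).Finite := hfin.inter_of_right _
    have hemp : ({u | Q u} ∩ Function.support g) = ∅ :=
      (Set.ncard_eq_zero hfin').mp (Nat.le_zero.mp hcard)
    refine finsum_eq_zero_of_forall_eq_zero fun u => ?_
    by_cases hu : Q u
    · rw [if_pos hu]
      by_contra h0
      exact absurd (Set.eq_empty_iff_forall_notMem.mp hemp u) (by simp [hu, h0])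
    · rw [if_neg hu]
  | succ n ih =>
    intro Q hcard hQ
    have hfin' : ({u | Q u} ∩ Function.support g).Finite := hfin.inter_of_right _
    by_cases hne : ({u | Q u} ∩ Function.support g) = ∅
    · refine finsum_eq_zero_of_forall_eq_zero fun u => ?_
      by_cases hu : Q u
      · rw [if_pos hu]
        by_contra h0
        exact absurd (Set.eq_empty_iff_forall_notMem.mp hne u) (by simp [hu, h0])
      · rw [if_neg hu]
    · obtain ⟨u0, hu0⟩ := Set.nonempty_iff_ne_empty.mpr hne
      have hu0Q : Q u0 := hu0.1
      have hCQ : ∀ u, Rel u u0 → Q u := fun u h => hQ u0 u hu0Q (hsym _ _ h)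
      have hsplit : (fun u => if Q u then g u else 0) =
          (fun u => (if Rel u u0 then g u else 0) +
            (if Q u ∧ ¬ Rel u u0 then g u else 0)) := by
        funext u
        by_cases hq : Q u
        · by_cases hr : Rel u u0 <;> simp [hq, hr]
        · have hr : ¬ Rel u u0 := fun h => hq (hCQ u h)
          simp [hq, hr]
      have hf1 : (Function.support fun u => if Rel u u0 then g u else 0).Finite :=
        hfin.subset (by intro u hu; simp only [mem_support] at hu ⊢; intro h0; apply hu; simp [h0])
      have hf2 : (Function.support fun u => if Q u ∧ ¬ Rel u u0 then g u else 0).Finite :=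
        hfin.subset (by intro u hu; simp only [mem_support] at hu ⊢; intro h0; apply hu; simp [h0])
      rw [hsplit, finsum_add_distrib hf1 hf2, hcl u0, zero_add]
      refine Eq.trans (finsum_congr fun u => ?_) (ih (fun u => Q u ∧ ¬ Rel u u0) ?_ ?_)
      · congr
      · have hsub : {u | Q u ∧ ¬ Rel u u0} ∩ Function.support g ⊆
            ({u | Q u} ∩ Function.support g) \ {u0} := by
          intro u hu
          refine ⟨⟨hu.1.1, hu.2⟩, ?_⟩
          intro h
          rw [Set.mem_singleton_iff] at h
          exact hu.1.2 (h ▸ hrefl u0)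
        have h1 : (({u | Q u} ∩ Function.support g) \ {u0}).ncard =
            ({u | Q u} ∩ Function.support g).ncard - 1 :=
          Set.ncard_diff_singleton_of_mem hu0
        have h2 : 0 < ({u | Q u} ∩ Function.support g).ncard :=
          (Set.ncard_pos hfin').mpr ⟨u0, hu0⟩
        have h3 := Set.ncard_le_ncard hsub hfin'.sdiff
        show ({u | Q u ∧ ¬ Rel u u0} ∩ Function.support g).ncard ≤ n
        omega
      · rintro u u' ⟨hu, hnr⟩ hr
        exact ⟨hQ u u' hu hr, fun h => hnr (htr _ _ _ hr h)⟩

end ClosedSum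

section Shom

variable {G : Type*} [Category G] {A : G → Type*} [∀ e, Ring (A e)]
variable (R : ∀ e f : G, (e ⟶ f) → (e ⟶ f) → Prop)

@[simp] lemma castRH_refl (e : G) : castRH A (rfl : e = e) = RingHom.id (A e) := rfl

lemma injι (e f : G) :
    Function.Injective (fun s : e ⟶ f => (⟨e, f, s⟩ : CMor G)) := by
  intro s s' h
  simpa using h

lemma compSuppFin (z : CP A) (e f : G) :
    (Function.support (M := A f) fun s : e ⟶ f => z ⟨e, f, s⟩).Finite := by
  classical
  refine ((z.support.finite_toSet.preimage ((injι (G := G) e f).injOn)).subset ?_)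
  intro s hs
  simp only [Function.mem_support] at hs
  simpa [Set.mem_preimage, DFinsupp.mem_support_iff] using hs

open Classical in
lemma ifSuppFin (e f : G) (t : e ⟶ f) (z : CP A) :
    (Function.support (M := A f) fun s : e ⟶ f => if R e f s t then z ⟨e, f, s⟩ else 0).Finite :=
  (compSuppFin z e f).subset (by
    intro s hs
    simp only [mem_support] at hs ⊢
    intro h0; apply hs; simp [h0])

open Classical in
noncomputable def Shom (e f : G) (t : e ⟶ f) : CP A →+ A f where
  toFun z := ∑ᶠ s : e ⟶ f, if R e f s t then (z ⟨e, f, s⟩ : A f) else 0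
  map_zero' := finsum_eq_zero_of_forall_eq_zero fun s => by simp
  map_add' z w := by
    rw [← finsum_add_distrib (ifSuppFin R e f t z) (ifSuppFin R e f t w)]
    exact finsum_congr fun s => by by_cases h : R e f s t <;> simp [h]

open Classical in
lemma Shom_apply (e f : G) (t : e ⟶ f) (z : CP A) :
    Shom R e f t z = ∑ᶠ s : e ⟶ f, if R e f s t then (z ⟨e, f, s⟩ : A f) else 0 := rfl

open Classical in
lemma Shom_single_same (e f : G) (t m : e ⟶ f) (a : A f) :
    Shom R e f t (DFinsupp.single (⟨e, f, m⟩ : CMor G) a) = if R e f m t then a else 0 := by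
  rw [Shom_apply, finsum_eq_single _ m ?_]
  · rw [DFinsupp.single_eq_same]
  · intro s hs
    rw [DFinsupp.single_eq_of_ne fun hc => hs ((injι e f) hc)]
    simp

open Classical in
lemma Shom_single_ne (e f : G) (t : e ⟶ f) (p : CMor G) (a : A p.2.1)
    (h : p.1 ≠ e ∨ p.2.1 ≠ f) :
    Shom R e f t (DFinsupp.single p a) = 0 := by
  rw [Shom_apply]
  refine finsum_eq_zero_of_forall_eq_zero fun s => ?_
  have hne : p ≠ ⟨e, f, s⟩ := by rintro rfl; simp at h
  rw [DFinsupp.single_eq_of_ne hne.symm]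
  simp

end Shom

section Inner

variable {G : Type*} [Category G] {A : G → Type*} [∀ e, Ring (A e)]
variable (R : ∀ e f : G, (e ⟶ f) → (e ⟶ f) → Prop)

open Classical in
lemma left_inner (e f pd : G) (t : e ⟶ f) (pm : pd ⟶ f) (φ : A pd →+* A f) (a : A f)
    (z : CP A) :
    (z.sum fun q b => Shom R e f t
      (if h : q.2.1 = pd then
        DFinsupp.single (⟨q.1, f, (q.2.2 ≫ eqToHom h) ≫ pm⟩ : CMor G)
          (a * φ (castRH A h b))
       else 0))
    = a * φ (∑ᶠ u : e ⟶ pd, if R e f (u ≫ pm) t then z ⟨e, pd, u⟩ else 0) := by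
  classical
  set ι : (e ⟶ pd) → CMor G := fun u => ⟨e, pd, u⟩ with hι
  have hinj : Function.Injective ι := injι e pd
  set F : CMor G → A f := fun q =>
    Shom R e f t
      (if h : q.2.1 = pd then
        DFinsupp.single (⟨q.1, f, (q.2.2 ≫ eqToHom h) ≫ pm⟩ : CMor G)
          (a * φ (castRH A h (z q)))
       else 0) with hF
  have hzero : ∀ q : CMor G, z q = 0 → F q = 0 := by
    intro q h0
    rw [hF]
    dsimp only
    rw [h0]
    split <;> simp
  have hsub : Function.support F ⊆ ↑z.support := by
    intro q hq
    simp only [mem_support] at hq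
    simp only [Finset.mem_coe, DFinsupp.mem_support_iff]
    exact fun h0 => hq (hzero q h0)
  have hrange : Function.support F ⊆ Set.range ι := by
    intro q hq
    simp only [mem_support, hF] at hq
    obtain ⟨qd, qc, qm⟩ := q
    dsimp only at hq
    by_cases h2 : qc = pd
    · subst h2
      by_cases h1 : qd = e
      · subst h1; exact ⟨qm, rfl⟩
      · exfalso; apply hq
        rw [dif_pos rfl]
        exact Shom_single_ne R e f t _ _ (Or.inl h1)
    · exfalso; apply hq; rw [dif_neg h2]; exact map_zero _
  have hfin : (Function.support (M := A pd) fun u : e ⟶ pd =>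
      if R e f (u ≫ pm) t then z ⟨e, pd, u⟩ else 0).Finite :=
    (compSuppFin z e pd).subset (by
      intro u hu; simp only [mem_support] at hu ⊢; intro h0; apply hu; simp [h0])
  calc (z.sum fun q b => Shom R e f t
      (if h : q.2.1 = pd then
        DFinsupp.single (⟨q.1, f, (q.2.2 ≫ eqToHom h) ≫ pm⟩ : CMor G)
          (a * φ (castRH A h b))
       else 0))
      = ∑ᶠ q, F q := (finsum_eq_sum_of_support_subset F hsub).symm
    _ = ∑ᶠ q ∈ Set.range ι, F q := by
        rw [finsum_mem_def, Set.indicator_eq_self.mpr hrange]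
    _ = ∑ᶠ u, F (ι u) := finsum_mem_range hinj
    _ = ∑ᶠ u : e ⟶ pd, (if R e f (u ≫ pm) t then a * φ (z ⟨e, pd, u⟩) else 0) := by
        refine finsum_congr fun u => ?_
        rw [hF]
        dsimp only [hι]
        rw [dif_pos rfl, Shom_single_same]
        simp [ι]
    _ = a * φ (∑ᶠ u : e ⟶ pd, if R e f (u ≫ pm) t then z ⟨e, pd, u⟩ else 0) := by
        have hm := AddMonoidHom.map_finsum
          ((AddMonoidHom.mulLeft a).comp φ.toAddMonoidHom)
          (f := fun u : e ⟶ pd => if R e f (u ≫ pm) t then z ⟨e, pd, u⟩ else 0) (by exact hfin)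
        refine Eq.trans (finsum_congr fun u => ?_) hm.symm
        by_cases h : R e f (u ≫ pm) t <;> simp [h]

open Classical in
lemma right_inner (σ : ∀ e f : G, (e ⟶ f) → (A e →+* A f))
    (e f qc : G) (t : e ⟶ f) (qm : e ⟶ qc) (b : A qc) (z : CP A) :
    (z.sum fun p a => Shom R e f t
      (if h : qc = p.1 then
        DFinsupp.single (⟨e, p.2.1, (qm ≫ eqToHom h) ≫ p.2.2⟩ : CMor G)
          (a * σ p.1 p.2.1 p.2.2 (castRH A h b))
       else 0))
    = ∑ᶠ w : qc ⟶ f, if R e f (qm ≫ w) t then z ⟨qc, f, w⟩ * σ qc f w b else 0 := by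
  classical
  set ι : (qc ⟶ f) → CMor G := fun w => ⟨qc, f, w⟩ with hι
  have hinj : Function.Injective ι := injι qc f
  set F : CMor G → A f := fun p =>
    Shom R e f t
      (if h : qc = p.1 then
        DFinsupp.single (⟨e, p.2.1, (qm ≫ eqToHom h) ≫ p.2.2⟩ : CMor G)
          ((z p) * σ p.1 p.2.1 p.2.2 (castRH A h b))
       else 0) with hF
  have hzero : ∀ p : CMor G, z p = 0 → F p = 0 := by
    intro p h0
    rw [hF]
    dsimp only
    rw [h0]
    split <;> simp
  have hsub : Function.support F ⊆ ↑z.support := by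
    intro p hp
    simp only [mem_support] at hp
    simp only [Finset.mem_coe, DFinsupp.mem_support_iff]
    exact fun h0 => hp (hzero p h0)
  have hrange : Function.support F ⊆ Set.range ι := by
    intro p hp
    simp only [mem_support, hF] at hp
    obtain ⟨pd, pc, w⟩ := p
    dsimp only at hp
    by_cases h2 : qc = pd
    · subst h2
      by_cases h1 : pc = f
      · subst h1; exact ⟨w, rfl⟩
      · exfalso; apply hp
        rw [dif_pos rfl]
        exact Shom_single_ne R e f t _ _ (Or.inr h1)
    · exfalso; apply hp; rw [dif_neg h2]; exact map_zero _
  calc (z.sum fun p a => Shom R e f t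
      (if h : qc = p.1 then
        DFinsupp.single (⟨e, p.2.1, (qm ≫ eqToHom h) ≫ p.2.2⟩ : CMor G)
          (a * σ p.1 p.2.1 p.2.2 (castRH A h b))
       else 0))
      = ∑ᶠ p, F p := (finsum_eq_sum_of_support_subset F hsub).symm
    _ = ∑ᶠ p ∈ Set.range ι, F p := by
        rw [finsum_mem_def, Set.indicator_eq_self.mpr hrange]
    _ = ∑ᶠ w, F (ι w) := finsum_mem_range hinj
    _ = ∑ᶠ w : qc ⟶ f, (if R e f (qm ≫ w) t then z ⟨qc, f, w⟩ * σ qc f w b else 0) := by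
        refine finsum_congr fun w => ?_
        rw [hF]
        dsimp only [hι]
        rw [dif_pos rfl, Shom_single_same]
        simp [ι]

end Inner


/-- let `A ⋊^σ G` be a skew category algebra (all `α(s,t) = 1`)
with `σ` a functor, and let `R` be a congruence relation on `G` contained in
`ker σ`. If `I` is the twosided ideal generated by an element `Σ a_s u_s` with
`a_s = 0` whenever `s` is not `R`-equivalent to an identity morphism and
`Σ_{s ∈ [e]} a_s = 0` for every object `e`, then `A ∩ I = {0}`. -/
theorem skew_category_congruence_ideal_trivial_intersection
    {G : Type*} [Category G] [Finite G] {A : G → Type*} [∀ e, Ring (A e)]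
    (σ : ∀ e f : G, (e ⟶ f) → (A e →+* A f))
    (hσ1 : ∀ e : G, σ e e (𝟙 e) = RingHom.id (A e))
    (hσcomp : ∀ (e f g : G) (s : e ⟶ f) (t : f ⟶ g),
      σ e g (s ≫ t) = (σ f g t).comp (σ e f s))
    (R : ∀ e f : G, (e ⟶ f) → (e ⟶ f) → Prop)
    (hRrefl : ∀ (e f : G) (s : e ⟶ f), R e f s s)
    (hRsymm : ∀ (e f : G) (s t : e ⟶ f), R e f s t → R e f t s)
    (hRtrans : ∀ (e f : G) (s t r : e ⟶ f), R e f s t → R e f t r → R e f s r)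
    (hRcomp : ∀ (e f g : G) (s s' : e ⟶ f) (t t' : f ⟶ g),
      R e f s s' → R f g t t' → R e g (s ≫ t) (s' ≫ t'))
    (hRker : ∀ (e f : G) (s t : e ⟶ f), R e f s t → σ e f s = σ e f t)
    (I : Set (CP A)) (x : CP A)
    (hI : IsCrossedIdeal σ (fun _ _ _ _ _ => 1) I) (hxI : x ∈ I)
    (hImin : ∀ J : Set (CP A),
      IsCrossedIdeal σ (fun _ _ _ _ _ => 1) J → x ∈ J → I ⊆ J)
    (hsupp : ∀ p : CMor G, x p ≠ 0 →
      ∃ h : p.1 = p.2.1, R p.1 p.1 (p.2.2 ≫ eqToHom h.symm) (𝟙 p.1))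
    (hsum : ∀ e : G, (∑ᶠ (s : e ⟶ e) (_ : R e e s (𝟙 e)), x ⟨e, e, s⟩) = 0) :
    ∀ y ∈ I, (∀ p : CMor G, (∀ e : G, p ≠ ⟨e, e, 𝟙 e⟩) → y p = 0) → y = 0 := by
  classical
  intro y hyI hy
  -- The ideal of elements all of whose `R`-class sums vanish.
  have key_left : ∀ z : CP A, (∀ (e f : G) (t : e ⟶ f), Shom R e f t z = 0) →
      ∀ r : CP A, ∀ (e f : G) (t : e ⟶ f),
        Shom R e f t (catMul σ (fun _ _ _ _ _ => 1) r z) = 0 := by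
    intro z hz r e f t
    simp only [catMul, mul_one, map_dfinsuppSum]
    refine DFinsupp.sum_eq_zero fun p => ?_
    obtain ⟨pd, pc, pm⟩ := p
    dsimp only
    by_cases hpc : pc = f
    · subst hpc
      rw [left_inner R e pc pd t pm (σ pd pc pm) (r ⟨pd, pc, pm⟩) z]
      have h0 : (∑ᶠ u : e ⟶ pd, (if R e pc (u ≫ pm) t then z ⟨e, pd, u⟩ else 0 : A pd)) = 0 := by
        refine closed_sum (M := A pd) (R e pd) (hRrefl e pd) (hRsymm e pd) (hRtrans e pd)
          (fun u => (z ⟨e, pd, u⟩ : A pd)) (compSuppFin z e pd)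
          (fun t' => by have h := hz e pd t'; rwa [Shom_apply] at h)
          _ (fun u => R e pc (u ≫ pm) t) le_rfl ?_
        intro u u' hu hr
        exact hRtrans _ _ _ _ _
          (hRcomp _ _ _ _ _ _ _ (hRsymm _ _ _ _ hr) (hRrefl _ _ pm)) hu
      rw [h0, map_zero, mul_zero]
    · refine DFinsupp.sum_eq_zero fun q => ?_
      by_cases hq : q.2.1 = pd
      · rw [dif_pos hq]
        exact Shom_single_ne R e f t _ _ (Or.inr hpc)
      · rw [dif_neg hq, map_zero]
  have key_right : ∀ z : CP A, (∀ (e f : G) (t : e ⟶ f), Shom R e f t z = 0) →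
      ∀ r : CP A, ∀ (e f : G) (t : e ⟶ f),
        Shom R e f t (catMul σ (fun _ _ _ _ _ => 1) z r) = 0 := by
    intro z hz r e f t
    simp only [catMul, mul_one, map_dfinsuppSum]
    rw [DFinsupp.sum_comm]
    refine DFinsupp.sum_eq_zero fun q => ?_
    obtain ⟨qd, qc, qm⟩ := q
    dsimp only
    by_cases hqd : qd = e
    · subst hqd
      rw [right_inner R σ qd f qc t qm (r ⟨qd, qc, qm⟩) z]
      refine closed_sum (M := A f) (R qc f) (hRrefl qc f) (hRsymm qc f) (hRtrans qc f)
        (fun w => (z ⟨qc, f, w⟩ : A f) * σ qc f w (r ⟨qd, qc, qm⟩))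
        ((compSuppFin z qc f).subset (by
          intro w hw
          simp only [Function.mem_support] at hw ⊢
          intro h0; apply hw; simp [h0]))
        ?_ _ (fun w => R qd f (qm ≫ w) t) le_rfl ?_
      · intro t'
        have h1 : ∀ w : qc ⟶ f,
            (if R qc f w t' then (z ⟨qc, f, w⟩ : A f) * σ qc f w (r ⟨qd, qc, qm⟩) else 0)
            = (if R qc f w t' then (z ⟨qc, f, w⟩ : A f) else 0) * σ qc f t' (r ⟨qd, qc, qm⟩) := by
          intro w
          by_cases h : R qc f w t'
          · rw [if_pos h, if_pos h, hRker _ _ _ _ h]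
          · rw [if_neg h, if_neg h, zero_mul]
        rw [finsum_congr h1]
        have hm := AddMonoidHom.map_finsum
          (AddMonoidHom.mulRight (σ qc f t' (r ⟨qd, qc, qm⟩)))
          (f := fun w : qc ⟶ f => (if R qc f w t' then z ⟨qc, f, w⟩ else 0 : A f))
          (by exact ifSuppFin R qc f t' z)
        simp only [AddMonoidHom.mulRight_apply] at hm
        rw [← hm]
        have hz' := hz qc f t'
        rw [Shom_apply] at hz'
        rw [hz', zero_mul]
      · intro w w' hw hr
        exact hRtrans _ _ _ _ _
          (hRcomp _ _ _ _ _ _ _ (hRrefl _ _ qm) (hRsymm _ _ _ _ hr)) hw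
    · refine DFinsupp.sum_eq_zero fun p => ?_
      by_cases hq : qc = p.1
      · rw [dif_pos hq]
        exact Shom_single_ne R _ _ t _ _ (Or.inl hqd)
      · rw [dif_neg hq, map_zero]
  have hJideal : IsCrossedIdeal σ (fun _ _ _ _ _ => 1)
      {z : CP A | ∀ (e f : G) (t : e ⟶ f), Shom R e f t z = 0} := by
    refine ⟨fun e f t => map_zero _, ?_, ?_, ?_⟩
    · intro z w hzJ hwJ e f t
      rw [map_add, hzJ e f t, hwJ e f t, add_zero]
    · intro z hzJ e f t
      rw [map_neg, hzJ e f t, neg_zero]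
    · intro z r hzJ
      exact ⟨fun e f t => key_left z hzJ r e f t, fun e f t => key_right z hzJ r e f t⟩
  have hxJ : x ∈ {z : CP A | ∀ (e f : G) (t : e ⟶ f), Shom R e f t z = 0} := by
    intro e f t
    rw [Shom_apply]
    by_cases hc : ∃ s : e ⟶ f, R e f s t ∧ x ⟨e, f, s⟩ ≠ 0
    · obtain ⟨s0, hs0, hx0⟩ := hc
      obtain ⟨hef, hR0⟩ := hsupp ⟨e, f, s0⟩ hx0
      have hef' : e = f := hef
      subst hef'
      have hR0' : R e e (s0 ≫ 𝟙 e) (𝟙 e) := hR0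
      rw [Category.comp_id] at hR0'
      have htid : R e e t (𝟙 e) := hRtrans _ _ _ _ _ (hRsymm _ _ _ _ hs0) hR0'
      have hcong : (∑ᶠ s : e ⟶ e, (if R e e s t then x ⟨e, e, s⟩ else 0 : A e))
          = ∑ᶠ s : e ⟶ e, (if R e e s (𝟙 e) then x ⟨e, e, s⟩ else 0 : A e) :=
        finsum_congr fun s => by
          by_cases h : R e e s t
          · rw [if_pos h, if_pos (hRtrans _ _ _ _ _ h htid)]
          · rw [if_neg h,
              if_neg fun h' => h (hRtrans _ _ _ _ _ h' (hRsymm _ _ _ _ htid))]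
      rw [hcong]
      have hb := hsum e
      rw [show (∑ᶠ (s : e ⟶ e) (_ : R e e s (𝟙 e)), x ⟨e, e, s⟩)
          = ∑ᶠ s : e ⟶ e, (if R e e s (𝟙 e) then x ⟨e, e, s⟩ else 0 : A e)
        from finsum_congr fun s => finsum_eq_if] at hb
      exact hb
    · push_neg at hc
      refine finsum_eq_zero_of_forall_eq_zero fun s => ?_
      by_cases h : R e f s t
      · rw [if_pos h, hc s h]
      · rw [if_neg h]
  have hyJ := hImin _ hJideal hxJ hyI
  ext p
  rw [DFinsupp.zero_apply]
  by_cases hp : ∃ e : G, p = ⟨e, e, 𝟙 e⟩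
  · obtain ⟨e, rfl⟩ := hp
    have h0 := hyJ e e (𝟙 e)
    rw [Shom_apply] at h0
    have hsingle : (∑ᶠ s : e ⟶ e, (if R e e s (𝟙 e) then y ⟨e, e, s⟩ else 0 : A e))
        = if R e e (𝟙 e) (𝟙 e) then y ⟨e, e, 𝟙 e⟩ else 0 := by
      refine finsum_eq_single _ (𝟙 e) fun s hs => ?_
      have hys : y ⟨e, e, s⟩ = 0 := by
        refine hy ⟨e, e, s⟩ fun e' hEq => ?_
        have h1 : e = e' := congrArg Sigma.fst hEq
        subst h1
        exact hs ((injι e e) hEq)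
      rw [hys]
      simp
    rw [hsingle, if_pos (hRrefl e e (𝟙 e))] at h0
    exact h0
  · push_neg at hp
    exact hy p hp
end

section
/- Let A ⋊^σ G be a skew groupoid ring with G a groupoid with finitely many objects, all rings A_e equal to a fixed integral domain D, and each isotropy group G_e abelian. If A is not maximal commutative in A ⋊^σ G, then there exists a nonzero twosided ideal I of A ⋊^σ G with A ∩ I = {0}. Equivalently (contrapositive): if every nonzero twosided ideal of A ⋊^σ G intersects A nontrivially, then A is maximal commutative in A ⋊^σ G. -/
open CategoryTheory

section
open Classical
variable {G : Type*} [Groupoid G] {D : Type*} [CommRing D]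
variable (σ : ∀ e f : G, (e ⟶ f) → (D →+* D))


lemma dfsum_congr {ι : Type*} {β : ι → Type*} {γ : Type*} [DecidableEq ι] [∀ i, Zero (β i)]
    [∀ (i) (x : β i), Decidable (x ≠ 0)] [AddCommMonoid γ] (f : Π₀ i, β i)
    {g1 g2 : ∀ i, β i → γ} (h : ∀ i, g1 i (f i) = g2 i (f i)) : f.sum g1 = f.sum g2 :=
  Finset.sum_congr rfl fun i _ => h i

lemma dfsum_eq_zero {ι : Type*} {β : ι → Type*} {γ : Type*} [DecidableEq ι] [∀ i, Zero (β i)]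
    [∀ (i) (x : β i), Decidable (x ≠ 0)] [AddCommMonoid γ] (f : Π₀ i, β i)
    {g : ∀ i, β i → γ} (h : ∀ i, g i (f i) = 0) : f.sum g = 0 :=
  Finset.sum_eq_zero fun i _ => h i

lemma castRH_const {e f : G} (h : e = f) (b : D) :
    castRH (fun _ : G => D) h b = b := by subst h; rfl

lemma const_single_eq {i j : CMor G} (h : i = j) (v : D) :
    (DFinsupp.single i v : CP (fun _ : G => D)) = DFinsupp.single j v := by
  subst h; rfl

lemma single_apply_const (i j : CMor G) (v : D) :
    (DFinsupp.single i v : CP (fun _ : G => D)) j = if i = j then v else 0 := by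
  rcases eq_or_ne i j with rfl | hne
  · simp
  · simp [DFinsupp.single_eq_of_ne hne, hne]

def SRel (p q : CMor G) : Prop :=
  ∃ (h1 : p.1 = q.1) (h2 : p.2.1 = q.2.1),
    σ q.1 q.1 ((eqToHom h1.symm ≫ p.2.2 ≫ eqToHom h2) ≫ Groupoid.inv q.2.2) = RingHom.id D

lemma srel_mk {e f : G} (s t : e ⟶ f) :
    SRel σ ⟨e, f, s⟩ ⟨e, f, t⟩ ↔ σ e e (s ≫ Groupoid.inv t) = RingHom.id D := by
  constructor
  · rintro ⟨h1, h2, hn⟩; simpa using hn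
  · intro h; exact ⟨rfl, rfl, by simpa using h⟩

open Classical in
noncomputable def phi (p : CMor G) : CP (fun _ : G => D) →+ D :=
  DFinsupp.sumAddHom (fun q => if SRel σ p q then AddMonoidHom.id D else 0)

open Classical in
lemma phi_single (p q : CMor G) (v : D) :
    phi σ p (DFinsupp.single q v : CP (fun _ : G => D)) = if SRel σ p q then v else 0 := by
  rw [phi, DFinsupp.sumAddHom_single]
  split <;> simp

open Classical in
lemma phi_apply (p : CMor G) (x : CP (fun _ : G => D)) :
    phi σ p x = x.sum (fun q b => if SRel σ p q then b else 0) := by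
  rw [phi, DFinsupp.sumAddHom_apply]
  refine dfsum_congr x fun q => ?_
  split <;> simp

/-- `catMul` with a single on the left. -/
lemma catMul_single_left (α : ∀ e f g : G, (f ⟶ g) → (e ⟶ f) → D)
    (P : CMor G) (a : D) (x : CP (fun _ : G => D)) :
    catMul (A := fun _ : G => D) σ α (catSingle P a) x =
      x.sum fun q b =>
        if h : q.2.1 = P.1 then
          DFinsupp.single (⟨q.1, P.2.1, (q.2.2 ≫ eqToHom h) ≫ P.2.2⟩ : CMor G)
            (a * σ P.1 P.2.1 P.2.2 (castRH (fun _ : G => D) h b)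
              * α q.1 P.1 P.2.1 P.2.2 (q.2.2 ≫ eqToHom h))
        else 0 := by
  rw [catMul, catSingle, DFinsupp.sum_single_index]
  refine dfsum_eq_zero x fun q => ?_
  split <;> simp

/-- `catMul` with a single on the right. -/
lemma catMul_single_right (α : ∀ e f g : G, (f ⟶ g) → (e ⟶ f) → D)
    (Q : CMor G) (b : D) (x : CP (fun _ : G => D)) :
    catMul (A := fun _ : G => D) σ α x (catSingle Q b) =
      x.sum fun P a =>
        if h : Q.2.1 = P.1 then
          DFinsupp.single (⟨Q.1, P.2.1, (Q.2.2 ≫ eqToHom h) ≫ P.2.2⟩ : CMor G)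
            (a * σ P.1 P.2.1 P.2.2 (castRH (fun _ : G => D) h b)
              * α Q.1 P.1 P.2.1 P.2.2 (Q.2.2 ≫ eqToHom h))
        else 0 := by
  rw [catMul, catSingle]
  refine dfsum_congr x fun P => ?_
  rw [DFinsupp.sum_single_index]
  split <;> simp


lemma dfsum_add_distrib {ι : Type*} {β : ι → Type*} {γ : Type*} [DecidableEq ι] [∀ i, Zero (β i)]
    [∀ (i) (x : β i), Decidable (x ≠ 0)] [AddCommMonoid γ] (f : Π₀ i, β i)
    {g1 g2 : ∀ i, β i → γ} :
    (f.sum fun i b => g1 i b + g2 i b) = f.sum g1 + f.sum g2 :=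
  Finset.sum_add_distrib

open Classical in
lemma catMul_add_right (α : ∀ e f g : G, (f ⟶ g) → (e ⟶ f) → D)
    (x y z : CP (fun _ : G => D)) :
    catMul (A := fun _ : G => D) σ α x (y + z) =
      catMul (A := fun _ : G => D) σ α x y + catMul (A := fun _ : G => D) σ α x z := by
  simp only [catMul]
  refine Eq.trans (dfsum_congr x fun p => ?_) (dfsum_add_distrib x)
  refine DFinsupp.sum_add_index (fun q => ?_) (fun q b1 b2 => ?_)
  · split <;> simp
  · split
    · rw [map_add, map_add, mul_add, add_mul, DFinsupp.single_add]
    · simp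

open Classical in
noncomputable def catMulRight (α : ∀ e f g : G, (f ⟶ g) → (e ⟶ f) → D)
    (x : CP (fun _ : G => D)) : CP (fun _ : G => D) →+ CP (fun _ : G => D) :=
  AddMonoidHom.mk' (fun y => catMul (A := fun _ : G => D) σ α x y)
    (catMul_add_right σ α x)

open Classical in
lemma catMul_decomp_right (α : ∀ e f g : G, (f ⟶ g) → (e ⟶ f) → D)
    (x r : CP (fun _ : G => D)) :
    catMul (A := fun _ : G => D) σ α x r =
      r.sum fun Q b => catMul (A := fun _ : G => D) σ α x (catSingle Q b) := by
  have h0 : catMul (A := fun _ : G => D) σ α x r = catMulRight σ α x r := rfl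
  rw [h0]
  conv_lhs => rw [← DFinsupp.sum_single (f := r)]
  rw [map_dfinsuppSum]
  rfl

open Classical in
lemma catMul_decomp_left (α : ∀ e f g : G, (f ⟶ g) → (e ⟶ f) → D)
    (r x : CP (fun _ : G => D)) :
    catMul (A := fun _ : G => D) σ α r x =
      r.sum fun P a => catMul (A := fun _ : G => D) σ α (catSingle P a) x := by
  rw [catMul]
  exact dfsum_congr r fun P => (catMul_single_left σ α P (r P) x).symm


variable (hσ1 : ∀ e : G, σ e e (𝟙 e) = RingHom.id D)
variable (hσcomp : ∀ (e f g : G) (s : e ⟶ f) (t : f ⟶ g),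
      σ e g (s ≫ t) = (σ f g t).comp (σ e f s))

include hσcomp in
lemma sigma_triv_comp {e : G} {n m : e ⟶ e} (hn : σ e e n = RingHom.id D)
    (hm : σ e e m = RingHom.id D) : σ e e (n ≫ m) = RingHom.id D := by
  rw [hσcomp, hn, hm, RingHom.id_comp]

include hσ1 in
lemma srel_refl (p : CMor G) : SRel σ p p := by
  obtain ⟨e, f, s⟩ := p
  rw [srel_mk, Groupoid.comp_inv, hσ1]

include hσ1 hσcomp in
lemma srel_symm {p q : CMor G} (h : SRel σ p q) : SRel σ q p := by
  obtain ⟨e, f, s⟩ := p; obtain ⟨e', f', t⟩ := q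
  obtain ⟨h1, h2, -⟩ := id h
  cases h1; cases h2
  rw [srel_mk] at h ⊢
  calc σ e e (t ≫ Groupoid.inv s)
      = (σ e e (t ≫ Groupoid.inv s)).comp (σ e e (s ≫ Groupoid.inv t)) := by
        rw [h, RingHom.comp_id]
    _ = σ e e ((s ≫ Groupoid.inv t) ≫ (t ≫ Groupoid.inv s)) := (hσcomp _ _ _ _ _).symm
    _ = σ e e (s ≫ Groupoid.inv s) := by simp
    _ = RingHom.id D := by rw [Groupoid.comp_inv, hσ1]

include hσcomp in
lemma srel_trans {p q r : CMor G} (h : SRel σ p q) (h' : SRel σ q r) :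
    SRel σ p r := by
  obtain ⟨e, f, s⟩ := p; obtain ⟨e', f', t⟩ := q; obtain ⟨e'', f'', u⟩ := r
  obtain ⟨h1, h2, -⟩ := id h; cases h1; cases h2
  obtain ⟨h1, h2, -⟩ := id h'; cases h1; cases h2
  rw [srel_mk] at h h' ⊢
  have he : s ≫ Groupoid.inv u = (s ≫ Groupoid.inv t) ≫ (t ≫ Groupoid.inv u) := by simp
  rw [he]
  exact sigma_triv_comp σ hσcomp h h'

include hσ1 hσcomp in
lemma srel_conj {e f : G} (w m : e ⟶ f) :
    σ e e (m ≫ Groupoid.inv w) = RingHom.id D ↔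
      σ f f (Groupoid.inv w ≫ m) = RingHom.id D := by
  constructor
  · intro h
    have hm : Groupoid.inv w ≫ m = (Groupoid.inv w ≫ (m ≫ Groupoid.inv w)) ≫ w := by simp
    rw [hm, hσcomp, hσcomp, h, RingHom.id_comp, ← hσcomp, Groupoid.inv_comp, hσ1]
  · intro h
    have hm : m ≫ Groupoid.inv w = (w ≫ (Groupoid.inv w ≫ m)) ≫ Groupoid.inv w := by simp
    rw [hm, hσcomp, hσcomp, h, RingHom.id_comp, ← hσcomp, Groupoid.comp_inv, hσ1]

include hσcomp in
lemma sigma_eq_of_srel {e f : G} {s t : e ⟶ f} (h : SRel σ ⟨e, f, s⟩ ⟨e, f, t⟩) :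
    σ e f s = σ e f t := by
  rw [srel_mk] at h
  have hs : s = (s ≫ Groupoid.inv t) ≫ t := by simp
  rw [hs, hσcomp, h, RingHom.comp_id]

include hσcomp in
lemma sigma_eq_of_srel' {e f e' f' : G} {s : e ⟶ f} {t : e' ⟶ f'}
    (h : SRel σ ⟨e, f, s⟩ ⟨e', f', t⟩) : σ e f s = σ e' f' t := by
  obtain ⟨h1, h2, -⟩ := id h; cases h1; cases h2
  exact sigma_eq_of_srel σ hσcomp h

/-- main iff for left multiplication -/
lemma srel_comp_left_iff {a0 b0 pe pf qe qf : G} (s : a0 ⟶ b0) (f : pe ⟶ pf)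
    (g : qe ⟶ qf) (h : qf = pe) (hP : b0 = pf) :
    SRel σ ⟨a0, b0, s⟩ ⟨qe, pf, (g ≫ eqToHom h) ≫ f⟩ ↔
      SRel σ ⟨a0, pe, (s ≫ eqToHom hP) ≫ Groupoid.inv f⟩ ⟨qe, qf, g⟩ := by
  subst h; subst hP
  simp only [eqToHom_refl, Category.comp_id]
  constructor
  · rintro ⟨h1, h2, hn⟩
    cases h1
    refine ⟨rfl, rfl, ?_⟩
    simp only [eqToHom_refl, Category.comp_id, Category.id_comp] at hn ⊢
    convert hn using 2
    simp [Groupoid.inv_eq_inv]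
  · rintro ⟨h1, h2, hn⟩
    cases h1
    refine ⟨rfl, rfl, ?_⟩
    simp only [eqToHom_refl, Category.comp_id, Category.id_comp] at hn ⊢
    convert hn using 2
    simp [Groupoid.inv_eq_inv]

include hσ1 hσcomp in
/-- main iff for right multiplication -/
lemma srel_comp_right_iff {oe of pe pf a0 b0 : G} (w : oe ⟶ of) (f : pe ⟶ pf)
    (s : a0 ⟶ b0) (h : of = pe) (hd : a0 = oe) :
    SRel σ ⟨a0, b0, s⟩ ⟨oe, pf, (w ≫ eqToHom h) ≫ f⟩ ↔
      SRel σ ⟨of, b0, (Groupoid.inv w ≫ eqToHom hd.symm) ≫ s⟩ ⟨pe, pf, f⟩ := by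
  subst h; subst hd
  constructor
  · rintro ⟨h1, h2, hn⟩
    dsimp only at h2 hn
    subst h2
    refine ⟨rfl, rfl, ?_⟩
    simp only [eqToHom_refl, Category.comp_id, Category.id_comp] at hn ⊢
    have hn' : σ a0 a0 ((s ≫ Groupoid.inv f) ≫ Groupoid.inv w) = RingHom.id D := by
      convert hn using 2
      simp [Groupoid.inv_eq_inv]
    have hc := (srel_conj σ hσ1 hσcomp w (s ≫ Groupoid.inv f)).mp hn'
    convert hc using 2
    simp
  · rintro ⟨h1, h2, hn⟩
    dsimp only at h2 hn
    subst h2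
    refine ⟨rfl, rfl, ?_⟩
    simp only [eqToHom_refl, Category.comp_id, Category.id_comp] at hn ⊢
    have hn' : σ of of (Groupoid.inv w ≫ (s ≫ Groupoid.inv f)) = RingHom.id D := by
      convert hn using 2
      simp
    have hc := (srel_conj σ hσ1 hσcomp w (s ≫ Groupoid.inv f)).mpr hn'
    convert hc using 2
    simp [Groupoid.inv_eq_inv]


open Classical in
include hσ1 hσcomp in
lemma phi_mul_single_left (P : CMor G) (c : D) (x : CP (fun _ : G => D))
    (hx : ∀ p, phi σ p x = 0) (p0 : CMor G) :
    phi σ p0 (catMul (A := fun _ : G => D) σ (fun _ _ _ _ _ => (1:D)) (catSingle P c) x)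
      = 0 := by
  rw [catMul_single_left, map_dfinsuppSum]
  by_cases hP : p0.2.1 = P.2.1
  · -- transform into c * σ_P (phi p0' x)
    have step : (x.sum fun q b => phi σ p0
        (if h : q.2.1 = P.1 then
          DFinsupp.single (⟨q.1, P.2.1, (q.2.2 ≫ eqToHom h) ≫ P.2.2⟩ : CMor G)
            (c * σ P.1 P.2.1 P.2.2 (castRH (fun _ : G => D) h b) * 1)
        else 0)) =
        x.sum fun q b => c * σ P.1 P.2.1 P.2.2
          (if SRel σ (⟨p0.1, P.1, (p0.2.2 ≫ eqToHom hP) ≫ Groupoid.inv P.2.2⟩ : CMor G) q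
            then b else 0) := by
      refine dfsum_congr x fun q => ?_
      split
      · next h =>
        rw [phi_single, castRH_const, mul_one]
        rw [if_congr (srel_comp_left_iff σ p0.2.2 P.2.2 q.2.2 h hP) rfl rfl]
        split
        · rfl
        · rw [map_zero, mul_zero]
      · next h =>
        rw [map_zero, if_neg, map_zero, mul_zero]
        rintro ⟨h1, h2, -⟩
        exact h h2.symm
    rw [step]
    have pull : (x.sum fun q b => c * σ P.1 P.2.1 P.2.2
          (if SRel σ (⟨p0.1, P.1, (p0.2.2 ≫ eqToHom hP) ≫ Groupoid.inv P.2.2⟩ : CMor G) q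
            then b else 0)) =
        c * σ P.1 P.2.1 P.2.2
          (x.sum fun q b => if SRel σ (⟨p0.1, P.1,
            (p0.2.2 ≫ eqToHom hP) ≫ Groupoid.inv P.2.2⟩ : CMor G) q then b else 0) := by
      simp only [DFinsupp.sum]
      rw [← Finset.mul_sum, ← map_sum]
    rw [pull, ← phi_apply, hx, map_zero, mul_zero]
  · refine dfsum_eq_zero x fun q => ?_
    split
    · rw [phi_single, if_neg]
      rintro ⟨h1, h2, -⟩
      exact hP h2
    · exact map_zero _

open Classical in
include hσ1 hσcomp in
lemma phi_mul_single_right (Q : CMor G) (c : D) (x : CP (fun _ : G => D))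
    (hx : ∀ p, phi σ p x = 0) (p0 : CMor G) :
    phi σ p0 (catMul (A := fun _ : G => D) σ (fun _ _ _ _ _ => (1:D)) x (catSingle Q c))
      = 0 := by
  rw [catMul_single_right, map_dfinsuppSum]
  by_cases hd : p0.1 = Q.1
  · set p0'' : CMor G :=
      ⟨Q.2.1, p0.2.1, (Groupoid.inv Q.2.2 ≫ eqToHom hd.symm) ≫ p0.2.2⟩ with hp0''
    have step : (x.sum fun P a => phi σ p0
        (if h : Q.2.1 = P.1 then
          DFinsupp.single (⟨Q.1, P.2.1, (Q.2.2 ≫ eqToHom h) ≫ P.2.2⟩ : CMor G)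
            (a * σ P.1 P.2.1 P.2.2 (castRH (fun _ : G => D) h c) * 1)
        else 0)) =
        x.sum fun P a => (if SRel σ p0'' P then a else 0)
          * σ Q.2.1 p0.2.1 ((Groupoid.inv Q.2.2 ≫ eqToHom hd.symm) ≫ p0.2.2) c := by
      refine dfsum_congr x fun P => ?_
      split
      · next h =>
        rw [phi_single, castRH_const, mul_one]
        rw [if_congr (srel_comp_right_iff σ hσ1 hσcomp Q.2.2 P.2.2 p0.2.2 h hd) rfl rfl]
        split
        · next hrel =>
          rw [sigma_eq_of_srel' σ hσcomp hrel]
        · rw [zero_mul]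
      · next h =>
        rw [map_zero, if_neg, zero_mul]
        rintro ⟨h1, h2, -⟩
        exact h h1
    rw [step]
    have pull : (x.sum fun P a => (if SRel σ p0'' P then a else 0)
          * σ Q.2.1 p0.2.1 ((Groupoid.inv Q.2.2 ≫ eqToHom hd.symm) ≫ p0.2.2) c) =
        (x.sum fun P a => if SRel σ p0'' P then a else 0)
          * σ Q.2.1 p0.2.1 ((Groupoid.inv Q.2.2 ≫ eqToHom hd.symm) ≫ p0.2.2) c := by
      simp only [DFinsupp.sum]
      rw [← Finset.sum_mul]
    rw [pull, ← phi_apply, hx, zero_mul]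
  · refine dfsum_eq_zero x fun P => ?_
    split
    · rw [phi_single, if_neg]
      rintro ⟨h1, h2, -⟩
      exact hd h1
    · exact map_zero _


lemma idxA (e : G) (P : CMor G) (h : e = P.1) :
    (⟨e, P.2.1, (𝟙 e ≫ eqToHom h) ≫ P.2.2⟩ : CMor G) = P := by
  obtain ⟨pe, pf, f⟩ := P
  dsimp at h
  subst h
  simp

lemma idxB (e : G) (q : CMor G) (h : q.2.1 = e) :
    (⟨q.1, e, (q.2.2 ≫ eqToHom h) ≫ 𝟙 e⟩ : CMor G) = q := by
  obtain ⟨qe, qf, g⟩ := q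
  dsimp at h
  subst h
  simp

open Classical in
lemma eval_mul_id_right (x : CP (fun _ : G => D)) (e : G) (a : D) (p : CMor G) :
    (catMul (A := fun _ : G => D) σ (fun _ _ _ _ _ => (1:D)) x
        (catSingle (A := fun _ : G => D) ⟨e, e, 𝟙 e⟩ a)) p =
      if e = p.1 then x p * σ p.1 p.2.1 p.2.2 a else 0 := by
  rw [catMul_single_right, DFinsupp.sum_apply]
  have step : (x.sum fun P b => ((if h : e = P.1 then
      DFinsupp.single (⟨e, P.2.1, (𝟙 e ≫ eqToHom h) ≫ P.2.2⟩ : CMor G)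
        (b * σ P.1 P.2.1 P.2.2 (castRH (fun _ : G => D) h a) * 1)
      else 0 : CP (fun _ : G => D)) p)) =
      x.sum fun P b => if P = p then (if e = P.1 then b * σ P.1 P.2.1 P.2.2 a else 0)
        else 0 := by
    refine dfsum_congr x fun P => ?_
    split
    · next h =>
      rw [const_single_eq (idxA e P h), castRH_const, mul_one, single_apply_const]
    · next h =>
      simp [h]
  rw [step]
  simp only [DFinsupp.sum]
  rw [Finset.sum_ite_eq' x.support p]
  by_cases hm : p ∈ x.support
  · rw [if_pos hm]
  · rw [if_neg hm, DFinsupp.notMem_support_iff.mp hm]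
    split <;> simp

open Classical in
include hσ1 in
lemma eval_mul_id_left (x : CP (fun _ : G => D)) (e : G) (a : D) (p : CMor G) :
    (catMul (A := fun _ : G => D) σ (fun _ _ _ _ _ => (1:D))
        (catSingle (A := fun _ : G => D) ⟨e, e, 𝟙 e⟩ a) x) p =
      if p.2.1 = e then a * x p else 0 := by
  rw [catMul_single_left, DFinsupp.sum_apply]
  have step : (x.sum fun q b => ((if h : q.2.1 = e then
      DFinsupp.single (⟨q.1, e, (q.2.2 ≫ eqToHom h) ≫ 𝟙 e⟩ : CMor G)
        (a * σ e e (𝟙 e) (castRH (fun _ : G => D) h b) * 1)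
      else 0 : CP (fun _ : G => D)) p)) =
      x.sum fun q b => if q = p then (if q.2.1 = e then a * b else 0) else 0 := by
    refine dfsum_congr x fun q => ?_
    split
    · next h =>
      rw [const_single_eq (idxB e q h), castRH_const, mul_one, hσ1, single_apply_const]
      simp [h]
    · next h =>
      simp [h]
  rw [step]
  simp only [DFinsupp.sum]
  rw [Finset.sum_ite_eq' x.support p]
  by_cases hm : p ∈ x.support
  · rw [if_pos hm]
  · rw [if_neg hm, DFinsupp.notMem_support_iff.mp hm]
    split <;> simp


include hσ1 hσcomp in
lemma srel_id_iff (e f : G) :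
    SRel σ ⟨e, e, 𝟙 e⟩ ⟨f, f, 𝟙 f⟩ ↔ e = f := by
  constructor
  · rintro ⟨h1, h2, -⟩
    exact h1
  · rintro rfl
    exact srel_refl σ hσ1 _

end


open Classical in
/-- let `A ⋊^σ G` be a skew groupoid ring over a groupoid with
finitely many objects, with all coefficient rings equal to a fixed integral
domain `D` and all isotropy groups abelian. If `A` is not maximal commutative
in `A ⋊^σ G`, then there is a nonzero twosided ideal of `A ⋊^σ G` meeting `A`
trivially. -/
theorem skew_groupoid_ring_not_maximal_commutative
    {G : Type*} [Groupoid G] [Finite G] {D : Type*} [CommRing D] [IsDomain D]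
    (σ : ∀ e f : G, (e ⟶ f) → (D →+* D))
    (hσ1 : ∀ e : G, σ e e (𝟙 e) = RingHom.id D)
    (hσcomp : ∀ (e f g : G) (s : e ⟶ f) (t : f ⟶ g),
      σ e g (s ≫ t) = (σ f g t).comp (σ e f s))
    (habel : ∀ (e : G) (s t : e ⟶ e), s ≫ t = t ≫ s)
    (hnotmax : ¬ ∀ x : CP (fun _ : G => D),
      (∀ (e : G) (a : D),
        catMul (A := fun _ : G => D) σ (fun _ _ _ _ _ => 1) x
            (catSingle (A := fun _ : G => D) ⟨e, e, 𝟙 e⟩ a)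
          = catMul (A := fun _ : G => D) σ (fun _ _ _ _ _ => 1)
            (catSingle (A := fun _ : G => D) ⟨e, e, 𝟙 e⟩ a) x) →
      ∀ p : CMor G, (∀ e : G, p ≠ ⟨e, e, 𝟙 e⟩) → x p = 0) :
    ∃ I : Set (CP (fun _ : G => D)),
      IsCrossedIdeal (A := fun _ : G => D) σ (fun _ _ _ _ _ => 1) I ∧
      (∃ y ∈ I, y ≠ 0) ∧
      ∀ y ∈ I, (∀ p : CMor G, (∀ e : G, p ≠ ⟨e, e, 𝟙 e⟩) → y p = 0) → y = 0 := by
  push_neg at hnotmax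
  obtain ⟨x, hxcomm, p, hpnot, hxp⟩ := hnotmax
  obtain ⟨pe, pf, s⟩ := p
  have he : pf = pe := by
    have h := DFunLike.congr_fun (hxcomm pe 1) (⟨pe, pf, s⟩ : CMor G)
    rw [eval_mul_id_right σ, eval_mul_id_left σ hσ1] at h
    simp only [if_pos rfl, map_one, mul_one, one_mul] at h
    by_contra hne
    rw [if_neg hne] at h
    exact hxp h
  subst he
  -- now s : pf ⟶ pf
  have hσs : σ pf pf s = RingHom.id D := by
    refine RingHom.ext fun a => ?_
    have h := DFunLike.congr_fun (hxcomm pf a) (⟨pf, pf, s⟩ : CMor G)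
    rw [eval_mul_id_right σ, eval_mul_id_left σ hσ1] at h
    simp only [if_pos rfl] at h
    rw [mul_comm a (x ⟨pf, pf, s⟩)] at h
    exact mul_left_cancel₀ hxp h
  have hne : (⟨pf, pf, s⟩ : CMor G) ≠ ⟨pf, pf, 𝟙 pf⟩ := hpnot pf
  have hrel : SRel σ (⟨pf, pf, s⟩ : CMor G) ⟨pf, pf, 𝟙 pf⟩ := by
    rw [srel_mk]
    have hs : s ≫ Groupoid.inv (𝟙 pf) = s := by simp [Groupoid.inv_eq_inv]
    rw [hs, hσs]
  refine ⟨{ y | ∀ p0 : CMor G, phi σ p0 y = 0 }, ⟨?_, ?_, ?_, ?_⟩, ?_, ?_⟩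
  · intro p0
    exact map_zero _
  · intro y z hy hz p0
    rw [map_add, hy p0, hz p0, add_zero]
  · intro y hy p0
    rw [map_neg, hy p0, neg_zero]
  · intro y r hy
    constructor
    · intro p0
      rw [catMul_decomp_left σ _ r y, map_dfinsuppSum]
      exact dfsum_eq_zero r fun P => phi_mul_single_left σ hσ1 hσcomp P (r P) y hy p0
    · intro p0
      rw [catMul_decomp_right σ _ y r, map_dfinsuppSum]
      exact dfsum_eq_zero r fun Q => phi_mul_single_right σ hσ1 hσcomp Q (r Q) y hy p0
  · refine ⟨catSingle (A := fun _ : G => D) ⟨pf, pf, s⟩ (1 : D)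
      - catSingle (A := fun _ : G => D) ⟨pf, pf, 𝟙 pf⟩ (1 : D), fun p0 => ?_, fun h0 => ?_⟩
    · rw [map_sub, catSingle, catSingle, phi_single, phi_single,
        if_congr ⟨fun h => srel_trans σ hσcomp h hrel,
          fun h => srel_trans σ hσcomp h (srel_symm σ hσ1 hσcomp hrel)⟩ rfl rfl,
        sub_self]
    · have h := DFunLike.congr_fun h0 (⟨pf, pf, s⟩ : CMor G)
      rw [DFinsupp.sub_apply, catSingle, catSingle, single_apply_const, single_apply_const,
        if_pos rfl, if_neg (Ne.symm hne), sub_zero, DFinsupp.zero_apply] at h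
      exact one_ne_zero h
  · intro y hy hA
    refine DFunLike.ext _ _ fun p0 => ?_
    rw [DFinsupp.zero_apply]
    by_cases hid : ∃ e : G, p0 = ⟨e, e, 𝟙 e⟩
    · obtain ⟨e, rfl⟩ := hid
      have h := hy ⟨e, e, 𝟙 e⟩
      rw [phi_apply] at h
      have step : (y.sum fun q b => if SRel σ (⟨e, e, 𝟙 e⟩ : CMor G) q then b else 0) =
          y.sum fun q b => if q = (⟨e, e, 𝟙 e⟩ : CMor G) then b else 0 := by
        refine dfsum_congr y fun q => ?_
        by_cases hq : ∃ f : G, q = ⟨f, f, 𝟙 f⟩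
        · obtain ⟨f, rfl⟩ := hq
          by_cases hef : e = f
          · subst hef
            rw [if_pos (srel_refl σ hσ1 _), if_pos rfl]
          · rw [if_neg, if_neg]
            · intro hq'
              exact hef (congrArg Sigma.fst hq').symm
            · intro hq'
              exact hef ((srel_id_iff σ hσ1 hσcomp e f).mp hq')
        · push_neg at hq
          rw [hA q hq]
          split <;> split <;> rfl
      rw [step] at h
      rw [← h]
      simp only [DFinsupp.sum]
      rw [Finset.sum_ite_eq' y.support]
      by_cases hm : (⟨e, e, 𝟙 e⟩ : CMor G) ∈ y.support
      · rw [if_pos hm]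
      · rw [if_neg hm, DFinsupp.notMem_support_iff.mp hm]
    · push_neg at hid
      exact hA p0 hid
end
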